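/- Let f : [0,T] → ℝ be a Lebesgue-integrable function and let a, b be real constants with b ≠ 0. If f(t) ≤ a + b·∫₀ᵗ f(τ) dτ for almost every t ∈ [0,T], then ∫₀ᵗ f(τ) dτ ≤ (a/b)·(exp(bt) − 1) for all t ∈ [0,T]. -/

import Mathlib

open MeasureTheory Set

private lemma exp_neg_integral (b : ℝ) (hb : b ≠ 0) (u v : ℝ) :
    ∫ s in u..v, Real.exp (-(b * s)) =
      (Real.exp (-(b * u)) - Real.exp (-(b * v))) / b := by
  have hderiv : ∀ x ∈ Set.uIcc u v,
      HasDerivAt (fun y => -(Real.exp (-(b * y)) / b)) (Real.exp (-(b * x))) x := by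
    intro x _
    have h1 : HasDerivAt (fun y : ℝ => -(b * y)) (-b) x := by
      simpa using (hasDerivAt_id x).const_mul (-b)
    have h2 : HasDerivAt (fun y : ℝ => Real.exp (-(b * y)))
        (Real.exp (-(b * x)) * (-b)) x := (Real.hasDerivAt_exp _).comp x h1
    have h3 := (h2.div_const b).neg
    convert h3 using 1
    · rfl
    · rfl
    · funext y; simp
    field_simp
  rw [intervalIntegral.integral_eq_sub_of_hasDerivAt hderiv
    ((Continuous.intervalIntegrable (by continuity) _ _))]
  ring

theorem gronwall_type_lemma
    (T : ℝ) (hT : 0 < T) (f : ℝ → ℝ) (hf : IntegrableOn f (Icc 0 T))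
    (a b : ℝ) (hb : b ≠ 0)
    (h : ∀ᵐ t ∂(volume.restrict (Icc (0:ℝ) T)),
      f t ≤ a + b * ∫ τ in (0:ℝ)..t, f τ) :
    ∀ t ∈ Icc (0:ℝ) T, (∫ τ in (0:ℝ)..t, f τ) ≤ a / b * (Real.exp (b * t) - 1) := by
  intro t ht
  obtain ⟨ht0, htT⟩ := ht
  set E : ℝ → ℝ := fun s => Real.exp (-(b * s)) with hEdef
  set F : ℝ → ℝ := fun s => ∫ τ in (0:ℝ)..s, f τ with hFdef
  have hEpos : ∀ s, 0 < E s := fun s => Real.exp_pos _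
  have hEc : Continuous E := by continuity
  -- integrability facts
  have hfIcc : IntegrableOn f (Icc 0 t) := hf.mono_set (Icc_subset_Icc le_rfl htT)
  have hfI : IntegrableOn f (Ioc 0 t) := hfIcc.mono_set Ioc_subset_Icc_self
  have hFc : ContinuousOn F (Icc 0 t) := by
    have := intervalIntegral.continuousOn_primitive_interval (a := (0:ℝ)) (b := t) (μ := volume) (f := f)
      (by rwa [uIcc_of_le ht0])
    rwa [uIcc_of_le ht0] at this
  have hEI : IntegrableOn E (Ioc 0 t) :=
    (hEc.continuousOn.integrableOn_Icc).mono_set Ioc_subset_Icc_self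
  have hEf : IntegrableOn (fun τ => E τ * f τ) (Ioc 0 t) :=
    (IntegrableOn.continuousOn_mul hEc.continuousOn hfIcc isCompact_Icc).mono_set
      Ioc_subset_Icc_self
  have hEF : IntegrableOn (fun s => E s * F s) (Ioc 0 t) :=
    ((hEc.continuousOn.mul hFc).integrableOn_Icc).mono_set Ioc_subset_Icc_self
  have hEaF : IntegrableOn (fun τ => E τ * (a + b * F τ)) (Ioc 0 t) :=
    ((hEc.continuousOn.mul
      (continuousOn_const.add (continuousOn_const.mul hFc))).integrableOn_Icc).mono_set
      Ioc_subset_Icc_self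
  -- Fubini step
  set μ := volume.restrict (Ioc (0:ℝ) t) with hμdef
  have hprod : Integrable (Function.uncurry fun s τ => if τ ≤ s then E s * f τ else 0)
      (μ.prod μ) := by
    have h3 : Integrable (fun p : ℝ × ℝ => E p.1 * f p.2) (μ.prod μ) :=
      Integrable.mul_prod hEI hfI
    have hS : MeasurableSet {p : ℝ × ℝ | p.2 ≤ p.1} :=
      measurableSet_le measurable_snd measurable_fst
    have h4 := h3.indicator hS
    convert h4 using 1
    · rfl
    funext p; simp [Function.uncurry, Set.indicator_apply]
  have hswap := MeasureTheory.integral_integral_swap hprod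
  have hL : (∫ s, ∫ τ, (if τ ≤ s then E s * f τ else 0) ∂μ ∂μ)
      = ∫ s in Ioc (0:ℝ) t, E s * F s := by
    refine setIntegral_congr_fun measurableSet_Ioc (fun s hs => ?_)
    have h1 : (fun τ => if τ ≤ s then E s * f τ else 0)
        = (Iic s).indicator (fun τ => E s * f τ) := by
      funext τ; simp [Set.indicator_apply]
    rw [h1, setIntegral_indicator measurableSet_Iic]
    have h2 : Ioc 0 t ∩ Iic s = Ioc 0 s := by
      rw [Ioc_inter_Iic, min_eq_right hs.2]
    rw [h2, MeasureTheory.integral_const_mul]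
    congr 1
    rw [hFdef]
    exact (intervalIntegral.integral_of_le hs.1.le).symm
  have hR : (∫ τ, ∫ s, (if τ ≤ s then E s * f τ else 0) ∂μ ∂μ)
      = ∫ τ in Ioc (0:ℝ) t, ((E τ - E t) / b) * f τ := by
    refine setIntegral_congr_fun measurableSet_Ioc (fun τ hτ => ?_)
    have h1 : (fun s => if τ ≤ s then E s * f τ else 0)
        = (Ici τ).indicator (fun s => E s * f τ) := by
      funext s; simp [Set.indicator_apply]
    rw [h1, setIntegral_indicator measurableSet_Ici]
    have h2 : Ioc 0 t ∩ Ici τ = Icc τ t := by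
      ext x
      simp only [mem_inter_iff, mem_Ici, mem_Ioc, mem_Icc]
      constructor
      · rintro ⟨⟨h1', h2'⟩, h3'⟩; exact ⟨h3', h2'⟩
      · rintro ⟨h1', h2'⟩; exact ⟨⟨lt_of_lt_of_le hτ.1 h1', h2'⟩, h1'⟩
    rw [h2, MeasureTheory.integral_mul_const]
    congr 1
    rw [MeasureTheory.integral_Icc_eq_integral_Ioc,
      ← intervalIntegral.integral_of_le hτ.2, hEdef]
    exact exp_neg_integral b hb τ t
  -- The key identity : b * K = A - E t * F t
  have hFt : (∫ τ in Ioc (0:ℝ) t, f τ) = F t := by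
    rw [hFdef]; exact (intervalIntegral.integral_of_le ht0).symm
  have hK : (∫ s in Ioc (0:ℝ) t, E s * F s)
      = ((∫ τ in Ioc (0:ℝ) t, E τ * f τ) - E t * F t) / b := by
    rw [← hL, hswap, hR]
    have h1 : (fun τ => ((E τ - E t) / b) * f τ)
        = fun τ => (1/b) * (E τ * f τ) - (E t / b) * f τ := by
      funext τ; field_simp
    rw [h1, integral_sub (hEf.const_mul _) (hfI.const_mul _),
      MeasureTheory.integral_const_mul, MeasureTheory.integral_const_mul, hFt]
    field_simp
  -- monotonicity
  have hae : ∀ᵐ τ ∂μ, E τ * f τ ≤ E τ * (a + b * F τ) := by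
    have hsub : Ioc (0:ℝ) t ⊆ Icc (0:ℝ) T := fun x hx =>
      ⟨hx.1.le, hx.2.trans htT⟩
    have h' := ae_restrict_of_ae_restrict_of_subset hsub h
    filter_upwards [h'] with τ hτ
    exact mul_le_mul_of_nonneg_left hτ (hEpos τ).le
  have hmono : (∫ τ in Ioc (0:ℝ) t, E τ * f τ)
      ≤ ∫ τ in Ioc (0:ℝ) t, E τ * (a + b * F τ) :=
    integral_mono_ae hEf hEaF hae
  -- compute the RHS of hmono
  have hC : (∫ τ in Ioc (0:ℝ) t, E τ) = (1 - E t) / b := by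
    rw [MeasureTheory.integral_Ioc_eq_integral_Ioo] -- maybe unnecessary
    rw [← MeasureTheory.integral_Ioc_eq_integral_Ioo,
      ← intervalIntegral.integral_of_le ht0, hEdef]
    have := exp_neg_integral b hb 0 t
    simpa using this
  have hRHS : (∫ τ in Ioc (0:ℝ) t, E τ * (a + b * F τ))
      = a * ((1 - E t) / b) + b * (((∫ τ in Ioc (0:ℝ) t, E τ * f τ) - E t * F t) / b) := by
    have h1 : (fun τ => E τ * (a + b * F τ))
        = fun τ => a * E τ + b * (E τ * F τ) := by
      funext τ; ring
    rw [h1, integral_add (hEI.const_mul _) (hEF.const_mul _),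
      MeasureTheory.integral_const_mul, MeasureTheory.integral_const_mul, hC, hK]
  rw [hRHS] at hmono
  have hmain : E t * F t ≤ a * ((1 - E t) / b) := by
    have hbk : b * (((∫ τ in Ioc (0:ℝ) t, E τ * f τ) - E t * F t) / b)
        = (∫ τ in Ioc (0:ℝ) t, E τ * f τ) - E t * F t := by
      field_simp
    rw [hbk] at hmono
    linarith
  -- conclude
  have hu : Real.exp (b * t) * E t = 1 := by
    rw [hEdef]; rw [← Real.exp_add]; simp
  have hfin := mul_le_mul_of_nonneg_left hmain (Real.exp_pos (b * t)).le
  have h2 : Real.exp (b * t) * (E t * F t) = F t := by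
    rw [← mul_assoc, hu, one_mul]
  have h3 : Real.exp (b * t) * (a * ((1 - E t) / b))
      = a / b * (Real.exp (b * t) - Real.exp (b * t) * E t) := by ring
  rw [h2, h3, hu] at hfin
  exact hfin
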